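/- For any task i and any edge (m,n) ∈ E, the node–edge cross term satisfies Σ_{y∈F} p_y·R̂_i^{(y_i)}·R̂_{mn}^{(y_m y_n)} ≤ (1/M^{N−1})·Σ_{y∈F} R̂_i^{(y_i)}. -/

import Mathlib

open Finset

theorem aux_sum_comp_mabsta (N M : ℕ) (i : Fin N) (f : Fin M → ℝ) :
    ∑ y : Fin N → Fin M, f (y i) = ((M:ℝ))^(N-1) * ∑ a : Fin M, f a := by
  have h1 : ∑ y : Fin N → Fin M, f (y i)
      = ∑ z : Fin M × ({j : Fin N // j ≠ i} → Fin M), f z.1 :=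
    Fintype.sum_equiv (Equiv.piSplitAt i (fun _ => Fin M)) _ (fun z => f z.1) (fun y => rfl)
  have hc : Fintype.card ({j : Fin N // j ≠ i} → Fin M) = M ^ (N-1) := by
    simp [Fintype.card_fun, Fintype.card_subtype_compl]
  rw [h1, Fintype.sum_prod_type]
  simp only [Finset.sum_const, Finset.card_univ, hc, nsmul_eq_mul]
  rw [Finset.mul_sum]
  push_cast
  ring

/-- **node–edge cross term of the paper.**
For any task `i` and any edge `(m,n) ∈ E`,
`Σ_{y∈F} p_y · R̂_i^{(y_i)} · R̂_{mn}^{(y_m y_n)} ≤ (1/M^{N−1}) · Σ_{y∈F} R̂_i^{(y_i)}`. -/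
theorem mabsta_node_edge_cross_term
    (N M : ℕ) (hN : 2 ≤ N) (hM : 1 ≤ M)
    (E : Finset (Fin N × Fin N)) (hE : ∀ e ∈ E, e.1 ≠ e.2)
    (p : (Fin N → Fin M) → ℝ)
    (hp0 : ∀ y, 0 ≤ p y) (hp1 : ∑ y : Fin N → Fin M, p y = 1)
    (x : Fin N → Fin M)
    (R : Fin N → Fin M → ℝ) (hR : ∀ i j, R i j ∈ Set.Icc (0 : ℝ) 1)
    (Re : Fin N × Fin N → Fin M → Fin M → ℝ)
    (hRe : ∀ e ∈ E, ∀ j k, Re e j k ∈ Set.Icc (0 : ℝ) 1)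
    (hPex : ∀ i : Fin N,
      0 < ∑ z ∈ Finset.univ.filter (fun z : Fin N → Fin M => z i = x i), p z)
    (hPtx : ∀ e ∈ E,
      0 < ∑ z ∈ Finset.univ.filter
        (fun z : Fin N → Fin M => z e.1 = x e.1 ∧ z e.2 = x e.2), p z)
    (Rhat : Fin N → Fin M → ℝ)
    (hRhat : ∀ i j, Rhat i j =
      if j = x i then
        R i j / (∑ z ∈ Finset.univ.filter (fun z : Fin N → Fin M => z i = x i), p z)
      else 0)
    (Rhate : Fin N × Fin N → Fin M → Fin M → ℝ)
    (hRhate : ∀ e ∈ E, ∀ j k, Rhate e j k =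
      if j = x e.1 ∧ k = x e.2 then
        Re e j k / (∑ z ∈ Finset.univ.filter
          (fun z : Fin N → Fin M => z e.1 = x e.1 ∧ z e.2 = x e.2), p z)
      else 0) :
    ∀ i : Fin N, ∀ e ∈ E,
      ∑ y : Fin N → Fin M, p y * Rhat i (y i) * Rhate e (y e.1) (y e.2)
        ≤ (1 / (M : ℝ) ^ (N - 1)) * ∑ y : Fin N → Fin M, Rhat i (y i) := by
  intro i e he
  set Pi := ∑ z ∈ Finset.univ.filter (fun z : Fin N → Fin M => z i = x i), p z with hPidef
  set Pe := ∑ z ∈ Finset.univ.filter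
      (fun z : Fin N → Fin M => z e.1 = x e.1 ∧ z e.2 = x e.2), p z with hPedef
  have hPi : 0 < Pi := hPex i
  have hPe : 0 < Pe := hPtx e he
  have hR0 : 0 ≤ R i (x i) := (hR i (x i)).1
  have hc0 : 0 ≤ R i (x i) / Pi := div_nonneg hR0 hPi.le
  -- RHS computation
  have hsum : ∑ y : Fin N → Fin M, Rhat i (y i)
      = ((M:ℝ))^(N-1) * (R i (x i) / Pi) := by
    rw [aux_sum_comp_mabsta N M i (fun a => Rhat i a)]
    congr 1
    have hval : ∀ a : Fin M, Rhat i a = if a = x i then R i (x i) / Pi else 0 := by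
      intro a
      rw [hRhat i a]
      by_cases h : a = x i <;> simp [h, hPidef]
    simp_rw [hval]
    simp
  have hMpos : (0:ℝ) < (M:ℝ)^(N-1) := by positivity
  -- termwise bound of the LHS
  have hterm : ∀ y : Fin N → Fin M,
      p y * Rhat i (y i) * Rhate e (y e.1) (y e.2)
        ≤ (R i (x i) / Pi) * (1 / Pe) * (if y e.1 = x e.1 ∧ y e.2 = x e.2 then p y else 0) := by
    intro y
    by_cases hc : y e.1 = x e.1 ∧ y e.2 = x e.2
    · rw [if_pos hc]
      have h1 : Rhat i (y i) ≤ R i (x i) / Pi := by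
        rw [hRhat i (y i)]
        by_cases h : y i = x i
        · simp [h, hPidef]
        · simp [h, hc0]
      have h1' : 0 ≤ Rhat i (y i) := by
        rw [hRhat i (y i)]
        by_cases h : y i = x i
        · rw [if_pos h, h]; exact div_nonneg hR0 hPi.le
        · simp [h]
      have h2 : Rhate e (y e.1) (y e.2) ≤ 1 / Pe := by
        rw [hRhate e he (y e.1) (y e.2), if_pos hc]
        gcongr
        · exact (hRe e he (y e.1) (y e.2)).2
      have h2' : 0 ≤ Rhate e (y e.1) (y e.2) := by
        rw [hRhate e he (y e.1) (y e.2), if_pos hc]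
        exact div_nonneg (hRe e he (y e.1) (y e.2)).1 hPe.le
      calc p y * Rhat i (y i) * Rhate e (y e.1) (y e.2)
          ≤ p y * (R i (x i) / Pi) * (1 / Pe) :=
            mul_le_mul (mul_le_mul le_rfl h1 h1' (hp0 y)) h2 h2'
              (mul_nonneg (hp0 y) hc0)
        _ = (R i (x i) / Pi) * (1 / Pe) * p y := by ring
    · rw [hRhate e he (y e.1) (y e.2), if_neg hc, if_neg hc]
      simp
  calc ∑ y : Fin N → Fin M, p y * Rhat i (y i) * Rhate e (y e.1) (y e.2)
      ≤ ∑ y : Fin N → Fin M, (R i (x i) / Pi) * (1 / Pe) *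
          (if y e.1 = x e.1 ∧ y e.2 = x e.2 then p y else 0) :=
        Finset.sum_le_sum (fun y _ => hterm y)
    _ = (R i (x i) / Pi) * (1 / Pe) *
          ∑ y : Fin N → Fin M, (if y e.1 = x e.1 ∧ y e.2 = x e.2 then p y else 0) := by
        rw [Finset.mul_sum]
    _ = (R i (x i) / Pi) * (1 / Pe) * Pe := by
        rw [hPedef, Finset.sum_filter]
    _ = R i (x i) / Pi := by field_simp
    _ = (1 / (M : ℝ) ^ (N - 1)) * (((M:ℝ))^(N-1) * (R i (x i) / Pi)) := by
        field_simp
    _ = (1 / (M : ℝ) ^ (N - 1)) * ∑ y : Fin N → Fin M, Rhat i (y i) := by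
        rw [hsum]
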